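/- arXiv:1208.2241 — 4 statements merged into one kernel-verified Lean document; each statement's English description precedes it below -/
import Mathlib

section
/- Let x, y, z be distinct points in hyperbolic n-space. Let x' be the midpoint of the geodesic segment from x to z and y' the midpoint of the geodesic segment from y to z. Then dist(x', y') ≤ (1/2) · dist(x, y). -/
open Real RealInnerProductSpace

/-- Inverse hyperbolic cosine. -/
noncomputable def arcosh (x : ℝ) : ℝ := Real.log (x + Real.sqrt (x ^ 2 - 1))

/-- A point of hyperbolic `n`-space in the Poincaré ball model. -/
abbrev HypSpace (n : ℕ) := {p : EuclideanSpace ℝ (Fin n) // ‖p‖ < 1}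

/-- The hyperbolic distance in the Poincaré ball model. -/
noncomputable def hDist {n : ℕ} (x y : HypSpace n) : ℝ :=
  _root_.arcosh (1 + 2 * ‖(x : EuclideanSpace ℝ (Fin n)) - (y : EuclideanSpace ℝ (Fin n))‖ ^ 2 /
    ((1 - ‖(x : EuclideanSpace ℝ (Fin n))‖ ^ 2) * (1 - ‖(y : EuclideanSpace ℝ (Fin n))‖ ^ 2)))

/-- `m` is the midpoint of the geodesic segment from `p` to `q`:  it lies on the segment
(distances add up) and divides it into two equal halves. -/
def IsHypMidpoint {n : ℕ} (p m q : HypSpace n) : Prop :=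
  hDist p m = hDist p q / 2 ∧ hDist m q = hDist p q / 2


variable {n : ℕ}
local notation "E" => EuclideanSpace ℝ (Fin n)

noncomputable def cArg (p q : E) : ℝ :=
  1 + 2 * ‖p - q‖ ^ 2 / ((1 - ‖p‖ ^ 2) * (1 - ‖q‖ ^ 2))
noncomputable def tC (p : E) : ℝ := (1 + ‖p‖ ^ 2) / (1 - ‖p‖ ^ 2)
noncomputable def vC (p : E) : E := (2 / (1 - ‖p‖ ^ 2)) • p

lemma ball_pos {p : E} (hp : ‖p‖ < 1) : 0 < 1 - ‖p‖ ^ 2 := by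
  have h0 : 0 ≤ ‖p‖ := norm_nonneg p
  nlinarith

lemma inner_vC (p q : E) : ⟪vC p, vC q⟫ = (2 / (1 - ‖p‖ ^ 2)) * (2 / (1 - ‖q‖ ^ 2)) * ⟪p, q⟫ := by
  rw [vC, vC, real_inner_smul_left, real_inner_smul_right]; ring

lemma mink_eq {p q : E} (hp : ‖p‖ < 1) (hq : ‖q‖ < 1) :
    ⟪vC p, vC q⟫ - tC p * tC q = -(cArg p q) := by
  have hp' := ball_pos hp
  have hq' := ball_pos hq
  have hnorm : ‖p - q‖ ^ 2 = ‖p‖ ^ 2 - 2 * ⟪p, q⟫ + ‖q‖ ^ 2 := by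
    rw [@norm_sub_sq_real]
  rw [inner_vC, tC, tC, cArg, hnorm]
  field_simp
  ring

lemma cArg_comm (p q : E) : cArg p q = cArg q p := by
  unfold cArg; rw [norm_sub_rev]; ring

lemma cArg_ge_one {p q : E} (hp : ‖p‖ < 1) (hq : ‖q‖ < 1) : 1 ≤ cArg p q := by
  have hp' := ball_pos hp
  have hq' := ball_pos hq
  have : 0 ≤ 2 * ‖p - q‖ ^ 2 / ((1 - ‖p‖ ^ 2) * (1 - ‖q‖ ^ 2)) :=
    div_nonneg (by positivity) (by positivity)
  rw [cArg]; linarith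

lemma cArg_self {p : E} (hp : ‖p‖ < 1) : cArg p p = 1 := by
  have hp' := ball_pos hp
  rw [cArg]; simp

lemma tC_pos {p : E} (hp : ‖p‖ < 1) : 0 < tC p := by
  have hp' := ball_pos hp
  exact div_pos (by positivity) hp'

lemma mink_self {p : E} (hp : ‖p‖ < 1) : ⟪vC p, vC p⟫ = tC p ^ 2 - 1 := by
  have := mink_eq hp hp
  rw [cArg_self hp] at this
  nlinarith [this]

/-- the midpoint lifts to the normalized sum of the lifts -/
lemma mid_vec {x z m : E} (hx : ‖x‖ < 1) (hz : ‖z‖ < 1) (hm : ‖m‖ < 1) {A : ℝ}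
    (hA1 : 1 ≤ A) (h1 : cArg x m = A) (h2 : cArg m z = A) (h3 : cArg x z = 2 * A ^ 2 - 1) :
    tC m = (tC x + tC z) / (2 * A) ∧ vC m = (1 / (2 * A)) • (vC x + vC z) := by
  have hA0 : 0 < A := by linarith
  have Pmx : ⟪vC m, vC x⟫ = tC m * tC x - A := by
    have := mink_eq hm hx; rw [cArg_comm m x, h1] at this; linarith
  have Pmz : ⟪vC m, vC z⟫ = tC m * tC z - A := by
    have := mink_eq hm hz; rw [h2] at this; linarith
  have Pxz : ⟪vC x, vC z⟫ = tC x * tC z - (2 * A ^ 2 - 1) := by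
    have := mink_eq hx hz; rw [h3] at this; linarith
  have Pxx := mink_self hx
  have Pzz := mink_self hz
  have Pmm := mink_self hm
  have Pzx : ⟪vC z, vC x⟫ = tC x * tC z - (2 * A ^ 2 - 1) := by
    rw [real_inner_comm]; exact Pxz
  have Pxm : ⟪vC x, vC m⟫ = tC m * tC x - A := by rw [real_inner_comm]; exact Pmx
  have Pzm : ⟪vC z, vC m⟫ = tC m * tC z - A := by rw [real_inner_comm]; exact Pmz
  set w₀ : ℝ := tC m - (1 / (2 * A)) * (tC x + tC z) with hw₀
  set w : E := vC m - (1 / (2 * A)) • (vC x + vC z) with hw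
  have hWX : ⟪w, vC x⟫ = w₀ * tC x := by
    rw [hw, inner_sub_left, real_inner_smul_left, inner_add_left, hw₀]
    rw [Pmx, Pxx, Pzx]
    field_simp
    ring
  have hWW : ⟪w, w⟫ = w₀ ^ 2 := by
    rw [hw, inner_sub_left, inner_sub_right, inner_sub_right, real_inner_smul_left,
      real_inner_smul_left, real_inner_smul_right, real_inner_smul_right,
      inner_add_left, inner_add_left, inner_add_right, inner_add_right, inner_add_right]
    simp only [Pxm, Pzm, Pzx, Pmx, Pmz, Pxz, Pxx, Pzz, Pmm]
    rw [hw₀]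
    field_simp
    ring
  have hCS := real_inner_mul_inner_self_le w (vC x)
  rw [hWX, hWW, Pxx] at hCS
  have htx := tC_pos hx
  have hw0 : w₀ = 0 := by nlinarith [sq_nonneg w₀, sq_nonneg (tC x)]
  have hwz : w = 0 := by
    have : ⟪w, w⟫ = 0 := by rw [hWW, hw0]; ring
    exact inner_self_eq_zero.mp this
  constructor
  · have : w₀ = 0 := hw0
    rw [hw₀] at this
    field_simp at this ⊢
    linarith
  · have : w = 0 := hwz
    rw [hw, sub_eq_zero] at this
    exact this

lemma psd_compl {z : E} (hz : ‖z‖ < 1) (w : E) (w₀ : ℝ) (h : ⟪w, vC z⟫ = w₀ * tC z) :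
    w₀ ^ 2 ≤ ⟪w, w⟫ := by
  have h1 := real_inner_mul_inner_self_le w (vC z)
  rw [h, mink_self hz] at h1
  have h2 := tC_pos hz
  have h3 : (0:ℝ) ≤ ⟪w, w⟫ := real_inner_self_nonneg
  nlinarith [sq_nonneg w₀, mul_pos h2 h2]

lemma cs_compl {z : E} (hz : ‖z‖ < 1) (p q : E) (p0 q0 : ℝ)
    (hp : ⟪p, vC z⟫ = p0 * tC z) (hq : ⟪q, vC z⟫ = q0 * tC z) :
    (⟪p, q⟫ - p0 * q0) ^ 2 ≤ (⟪p, p⟫ - p0 ^ 2) * (⟪q, q⟫ - q0 ^ 2) := by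
  have quad : ∀ t : ℝ, 0 ≤ (⟪p, p⟫ - p0 ^ 2) * (t * t) + (2 * (⟪p, q⟫ - p0 * q0)) * t
      + (⟪q, q⟫ - q0 ^ 2) := by
    intro t
    have horth : ⟪t • p + q, vC z⟫ = (t * p0 + q0) * tC z := by
      rw [inner_add_left, real_inner_smul_left, hp, hq]; ring
    have h2 := psd_compl hz (t • p + q) (t * p0 + q0) horth
    have h3 : ⟪t • p + q, t • p + q⟫ = t * t * ⟪p, p⟫ + 2 * t * ⟪p, q⟫ + ⟪q, q⟫ := by
      simp only [inner_add_left, inner_add_right, real_inner_smul_left,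
        real_inner_smul_right, real_inner_comm q p]; ring
    nlinarith [h2, h3]
  have hd := discrim_le_zero quad
  rw [discrim] at hd
  nlinarith [hd]


lemma quad_ineq {A B C : ℝ} (hA1 : 1 ≤ A) (hB1 : 1 ≤ B) (hC1 : 1 ≤ C)
    (hCS' : ((2 * A ^ 2 - 1) * (2 * B ^ 2 - 1) - (2 * C ^ 2 - 1)) ^ 2 ≤
      ((2 * A ^ 2 - 1) ^ 2 - 1) * ((2 * B ^ 2 - 1) ^ 2 - 1)) :
    A ^ 2 + B ^ 2 + C ^ 2 - 1 ≤ 2 * A * B * C := by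
  have hL : (0:ℝ) < A ^ 2 + B ^ 2 + C ^ 2 - 1 := by nlinarith
  have hR : (0:ℝ) < 2 * A * B * C := by positivity
  have hsq : (A ^ 2 + B ^ 2 + C ^ 2 - 1) ^ 2 ≤ (2 * A * B * C) ^ 2 := by nlinarith [hCS']
  nlinarith [hsq, hL, hR]

set_option maxHeartbeats 1000000 in
lemma main_aux {u v w m₁ m₂ : E}
    (hu : ‖u‖ < 1) (hv : ‖v‖ < 1) (hw : ‖w‖ < 1) (hm₁ : ‖m₁‖ < 1) (hm₂ : ‖m₂‖ < 1)
    {A B C : ℝ} (hA1 : 1 ≤ A) (hB1 : 1 ≤ B) (hC1 : 1 ≤ C)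
    (hum : cArg u m₁ = A) (hmw : cArg m₁ w = A) (huw : cArg u w = 2 * A ^ 2 - 1)
    (hvm : cArg v m₂ = B) (hmw2 : cArg m₂ w = B) (hvw : cArg v w = 2 * B ^ 2 - 1)
    (huv : cArg u v = 2 * C ^ 2 - 1) :
    cArg m₁ m₂ ≤ C := by
  have hA0 : 0 < A := by linarith
  have hB0 : 0 < B := by linarith
  obtain ⟨ht1, hv1⟩ := mid_vec hu hw hm₁ hA1 hum hmw huw
  obtain ⟨ht2, hv2⟩ := mid_vec hv hw hm₂ hB1 hvm hmw2 hvw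
  -- pairwise Minkowski products
  have Puv : ⟪vC u, vC v⟫ = tC u * tC v - (2 * C ^ 2 - 1) := by
    have := mink_eq hu hv; rw [huv] at this; linarith
  have Puw : ⟪vC u, vC w⟫ = tC u * tC w - (2 * A ^ 2 - 1) := by
    have := mink_eq hu hw; rw [huw] at this; linarith
  have Pvw : ⟪vC v, vC w⟫ = tC v * tC w - (2 * B ^ 2 - 1) := by
    have := mink_eq hv hw; rw [hvw] at this; linarith
  have Pwv : ⟪vC w, vC v⟫ = tC v * tC w - (2 * B ^ 2 - 1) := by
    rw [real_inner_comm]; exact Pvw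
  have Pwu : ⟪vC w, vC u⟫ = tC u * tC w - (2 * A ^ 2 - 1) := by
    rw [real_inner_comm]; exact Puw
  have Pvu : ⟪vC v, vC u⟫ = tC u * tC v - (2 * C ^ 2 - 1) := by
    rw [real_inner_comm]; exact Puv
  have Pww := mink_self hw
  have Puu := mink_self hu
  have Pvv := mink_self hv
  -- value of cArg m₁ m₂
  have key := mink_eq hm₁ hm₂
  rw [hv1, hv2, ht1, ht2] at key
  simp only [real_inner_smul_left, real_inner_smul_right, inner_add_left, inner_add_right,
    Puv, Puw, Pwv, Pww] at key
  -- Cauchy-Schwarz step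
  have hCS := cs_compl hw (vC u - (2 * A ^ 2 - 1) • vC w) (vC v - (2 * B ^ 2 - 1) • vC w)
      (tC u - (2 * A ^ 2 - 1) * tC w) (tC v - (2 * B ^ 2 - 1) * tC w)
      (by simp only [inner_sub_left, real_inner_smul_left, Puw, Pww]; ring)
      (by simp only [inner_sub_left, real_inner_smul_left, Pvw, Pww]; ring)
  simp only [inner_sub_left, inner_sub_right, real_inner_smul_left, real_inner_smul_right,
    Puv, Puw, Pvw, Pwv, Pwu, Pvu, Pww, Puu, Pvv] at hCS
  have hCS' : ((2 * A ^ 2 - 1) * (2 * B ^ 2 - 1) - (2 * C ^ 2 - 1)) ^ 2 ≤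
      ((2 * A ^ 2 - 1) ^ 2 - 1) * ((2 * B ^ 2 - 1) ^ 2 - 1) := by linarith only [hCS]
  have hmain := quad_ineq hA1 hB1 hC1 hCS'
  have h8 : (0:ℝ) < 8 * A * B := by positivity
  have hAne : (A:ℝ) ≠ 0 := ne_of_gt hA0
  have hBne : (B:ℝ) ≠ 0 := ne_of_gt hB0
  field_simp at key
  have step : cArg m₁ m₂ * (16 * A ^ 2 * B ^ 2) = 8 * A * B * (A ^ 2 + B ^ 2 + C ^ 2 - 1) := by
    linear_combination (4 * A * B) * key
  have step2 : 8 * A * B * (A ^ 2 + B ^ 2 + C ^ 2 - 1) ≤ 8 * A * B * (2 * A * B * C) :=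
    mul_le_mul_of_nonneg_left hmain (le_of_lt h8)
  have heq : 8 * A * B * (2 * A * B * C) = C * (16 * A ^ 2 * B ^ 2) := by ring
  have hfin : cArg m₁ m₂ * (16 * A ^ 2 * B ^ 2) ≤ C * (16 * A ^ 2 * B ^ 2) := by
    linarith only [step, step2, heq]
  exact le_of_mul_le_mul_right hfin (by positivity)

lemma sinh_nonneg' {x : ℝ} (h : 0 ≤ x) : 0 ≤ sinh x := by
  rw [Real.sinh_eq]
  have := Real.exp_le_exp.2 (neg_le_self h)
  linarith

lemma cosh_arcosh {t : ℝ} (ht : 1 ≤ t) : cosh (_root_.arcosh t) = t := by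
  have h1 : 0 ≤ t ^ 2 - 1 := by nlinarith
  have hs : Real.sqrt (t ^ 2 - 1) ^ 2 = t ^ 2 - 1 := Real.sq_sqrt h1
  have hs0 : 0 ≤ Real.sqrt (t ^ 2 - 1) := Real.sqrt_nonneg _
  have hy : 0 < t + Real.sqrt (t ^ 2 - 1) := by nlinarith
  have hinv : (t + Real.sqrt (t ^ 2 - 1)) * (t - Real.sqrt (t ^ 2 - 1)) = 1 := by nlinarith
  rw [_root_.arcosh, Real.cosh_eq, Real.exp_log hy, Real.exp_neg, Real.exp_log hy,
    inv_eq_of_mul_eq_one_right hinv]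
  ring

lemma arcosh_cosh {t : ℝ} (ht : 0 ≤ t) : _root_.arcosh (cosh t) = t := by
  have h1 : cosh t ^ 2 - 1 = sinh t ^ 2 := by
    have := Real.cosh_sq_sub_sinh_sq t; linarith
  rw [_root_.arcosh, h1, Real.sqrt_sq (sinh_nonneg' ht), Real.cosh_eq, Real.sinh_eq]
  have : (exp t + exp (-t)) / 2 + (exp t - exp (-t)) / 2 = exp t := by ring
  rw [this, Real.log_exp]

lemma arcosh_le_arcosh {s t : ℝ} (hs : 1 ≤ s) (hst : s ≤ t) : _root_.arcosh s ≤ _root_.arcosh t := by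
  have h1 : 0 < s + Real.sqrt (s ^ 2 - 1) := by
    have := Real.sqrt_nonneg (s ^ 2 - 1); linarith
  apply Real.log_le_log h1
  have : Real.sqrt (s ^ 2 - 1) ≤ Real.sqrt (t ^ 2 - 1) := by
    apply Real.sqrt_le_sqrt; nlinarith
  linarith

lemma arcosh_nonneg {t : ℝ} (ht : 1 ≤ t) : 0 ≤ _root_.arcosh t := by
  apply Real.log_nonneg
  have := Real.sqrt_nonneg (t ^ 2 - 1); linarith


lemma hDist_eq {n : ℕ} (x y : HypSpace n) : hDist x y = _root_.arcosh (cArg x.1 y.1) := rfl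

lemma cosh_hDist {n : ℕ} (x y : HypSpace n) : cosh (hDist x y) = cArg x.1 y.1 := by
  rw [hDist_eq]; exact _root_.cosh_arcosh (cArg_ge_one x.2 y.2)

theorem midpoint_dist_le_half {n : ℕ} (x y z x' y' : HypSpace n)
    (hxy : x ≠ y) (hxz : x ≠ z) (hyz : y ≠ z)
    (hx' : IsHypMidpoint x x' z) (hy' : IsHypMidpoint y y' z) :
    hDist x' y' ≤ (1 / 2) * hDist x y := by
  set A := Real.cosh (hDist x z / 2) with hA
  set B := Real.cosh (hDist y z / 2) with hB
  set C := Real.cosh (hDist x y / 2) with hC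
  have hA1 : 1 ≤ A := Real.one_le_cosh _
  have hB1 : 1 ≤ B := Real.one_le_cosh _
  have hC1 : 1 ≤ C := Real.one_le_cosh _
  have hum : cArg x.1 x'.1 = A := by rw [← cosh_hDist, hx'.1]
  have hmw : cArg x'.1 z.1 = A := by rw [← cosh_hDist, hx'.2]
  have hvm : cArg y.1 y'.1 = B := by rw [← cosh_hDist, hy'.1]
  have hmw2 : cArg y'.1 z.1 = B := by rw [← cosh_hDist, hy'.2]
  have hdouble : ∀ s : ℝ, cosh (2 * (s / 2)) = 2 * cosh (s / 2) ^ 2 - 1 := by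
    intro s
    rw [Real.cosh_two_mul]
    have := Real.cosh_sq_sub_sinh_sq (s / 2)
    linarith
  have huw : cArg x.1 z.1 = 2 * A ^ 2 - 1 := by
    rw [← cosh_hDist, hA]
    have h2 : hDist x z = 2 * (hDist x z / 2) := by ring
    rw [h2, hdouble]
    ring_nf
  have hvw : cArg y.1 z.1 = 2 * B ^ 2 - 1 := by
    rw [← cosh_hDist, hB]
    have h2 : hDist y z = 2 * (hDist y z / 2) := by ring
    rw [h2, hdouble]
    ring_nf
  have huv : cArg x.1 y.1 = 2 * C ^ 2 - 1 := by
    rw [← cosh_hDist, hC]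
    have h2 : hDist x y = 2 * (hDist x y / 2) := by ring
    rw [h2, hdouble]
    ring_nf
  have hmm := main_aux x.2 y.2 z.2 x'.2 y'.2 hA1 hB1 hC1 hum hmw huw hvm hmw2 hvw huv
  have hnn : 0 ≤ hDist x y := _root_.arcosh_nonneg (cArg_ge_one x.2 y.2)
  calc hDist x' y' = _root_.arcosh (cArg x'.1 y'.1) := hDist_eq _ _
    _ ≤ _root_.arcosh C := _root_.arcosh_le_arcosh (cArg_ge_one x'.2 y'.2) hmm
    _ = hDist x y / 2 := by rw [hC]; exact _root_.arcosh_cosh (by linarith)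
    _ = (1 / 2) * hDist x y := by ring
end

section
/- Let a, b > 0 and γ ∈ [0, π]. Define c ≥ 0 by cosh(c) = cosh(a)·cosh(b) − sinh(a)·sinh(b)·cos(γ) and d ≥ 0 by cosh(d) = cosh(2a)·cosh(2b) − sinh(2a)·sinh(2b)·cos(γ). Then 2c ≤ d. -/
open Real

theorem hyperbolic_half_triangle (a b : ℝ) (ha : 0 < a) (hb : 0 < b)
    (γ : ℝ) (hγ : γ ∈ Set.Icc 0 Real.pi) (c d : ℝ) (hc : 0 ≤ c) (hd : 0 ≤ d)
    (hcoshc : Real.cosh c = Real.cosh a * Real.cosh b - Real.sinh a * Real.sinh b * Real.cos γ)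
    (hcoshd : Real.cosh d =
      Real.cosh (2 * a) * Real.cosh (2 * b) - Real.sinh (2 * a) * Real.sinh (2 * b) * Real.cos γ) :
    2 * c ≤ d := by
  have ha2 : Real.cosh a ^ 2 = 1 + Real.sinh a ^ 2 := by rw [Real.cosh_sq]; ring
  have hb2 : Real.cosh b ^ 2 = 1 + Real.sinh b ^ 2 := by rw [Real.cosh_sq]; ring
  have hcos : Real.cos γ ^ 2 ≤ 1 := Real.cos_sq_le_one γ
  have hc2 : Real.sinh c ^ 2 =
      (Real.cosh a * Real.cosh b - Real.sinh a * Real.sinh b * Real.cos γ) ^ 2 - 1 := by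
    rw [Real.sinh_sq, hcoshc]
  have key : Real.cosh (2 * c) ≤ Real.cosh d := by
    rw [Real.cosh_two_mul, hcoshc, hcoshd, Real.cosh_two_mul, Real.cosh_two_mul,
      Real.sinh_two_mul, Real.sinh_two_mul]
    nlinarith [hc2, sq_nonneg (Real.sinh a * Real.sinh b), sq_nonneg (Real.sinh a * Real.sinh b * Real.cos γ)]
  have := Real.cosh_le_cosh.mp key
  rwa [abs_of_nonneg (by linarith), abs_of_nonneg hd] at this
end

section
/- For all real a, b and γ with cos²(γ) ≤ 1: 2·(cosh(a)·cosh(b) − sinh(a)·sinh(b)·cos(γ))² − 1 ≤ cosh(2a)·cosh(2b) − sinh(2a)·sinh(2b)·cos(γ). -/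
open Real

theorem law_of_cosines_midpoint_core (a b γ : ℝ) (hγ : Real.cos γ ^ 2 ≤ 1) :
    2 * (Real.cosh a * Real.cosh b - Real.sinh a * Real.sinh b * Real.cos γ) ^ 2 - 1 ≤
      Real.cosh (2 * a) * Real.cosh (2 * b) - Real.sinh (2 * a) * Real.sinh (2 * b) * Real.cos γ := by
  rw [Real.cosh_two_mul, Real.cosh_two_mul, Real.sinh_two_mul, Real.sinh_two_mul,
    Real.cosh_sq a, Real.cosh_sq b]
  have ha : Real.cosh a ^ 2 = Real.sinh a ^ 2 + 1 := Real.cosh_sq a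
  have hb : Real.cosh b ^ 2 = Real.sinh b ^ 2 + 1 := Real.cosh_sq b
  nlinarith [mul_nonneg (mul_nonneg (sq_nonneg (Real.sinh a)) (sq_nonneg (Real.sinh b))) (sub_nonneg.2 hγ), sq_nonneg (Real.sinh a * Real.sinh b), ha, hb, mul_self_nonneg (Real.cosh a * Real.cosh b - Real.sinh a * Real.sinh b * Real.cos γ)]
end

section
/- In hyperbolic law of cosines form: for a, b > 0, if cosh(c) = cosh(a)cosh(b) − sinh(a)sinh(b)cos(γ) and cosh(d) = cosh(2a)cosh(2b) − sinh(2a)sinh(2b)cos(γ) with γ ∈ (0, π), then 2c < d (strict inequality). -/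
open Real

theorem hyperbolic_half_triangle_strict (a b : ℝ) (ha : 0 < a) (hb : 0 < b)
    (γ : ℝ) (hγ : γ ∈ Set.Ioo 0 Real.pi) (c d : ℝ) (hc : 0 ≤ c) (hd : 0 ≤ d)
    (hcoshc : Real.cosh c = Real.cosh a * Real.cosh b - Real.sinh a * Real.sinh b * Real.cos γ)
    (hcoshd : Real.cosh d =
      Real.cosh (2 * a) * Real.cosh (2 * b) - Real.sinh (2 * a) * Real.sinh (2 * b) * Real.cos γ) :
    2 * c < d := by
  obtain ⟨hγ0, hγπ⟩ := hγ
  have hs : 0 < Real.sin γ := Real.sin_pos_of_pos_of_lt_pi hγ0 hγπ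
  have ht : Real.cos γ ^ 2 < 1 := by nlinarith [Real.sin_sq_add_cos_sq γ]
  have key : Real.cosh (2 * c) < Real.cosh d := by
    rw [Real.cosh_two_mul, hcoshc, hcoshd, Real.cosh_two_mul, Real.cosh_two_mul,
      Real.sinh_two_mul, Real.sinh_two_mul]
    have h1 : Real.cosh a ^ 2 = Real.sinh a ^ 2 + 1 := Real.cosh_sq a
    have h2 : Real.cosh b ^ 2 = Real.sinh b ^ 2 + 1 := Real.cosh_sq b
    have hsa : 0 < Real.sinh a := Real.sinh_pos_iff.mpr ha
    have hsb : 0 < Real.sinh b := Real.sinh_pos_iff.mpr hb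
    have hc2 : Real.sinh c ^ 2 =
        (Real.cosh a * Real.cosh b - Real.sinh a * Real.sinh b * Real.cos γ) ^ 2 - 1 := by
      have := Real.cosh_sq c
      rw [hcoshc] at this
      linarith
    rw [hc2]
    nlinarith [mul_pos (mul_pos hsa hsb) (mul_pos hsa hsb)]
  rw [Real.cosh_lt_cosh] at key
  calc 2 * c ≤ |2 * c| := le_abs_self _
    _ < |d| := key
    _ = d := abs_of_nonneg hd
end
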